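/- Let P be a lattice, f : P → ℝ nonnegative and order-reversing on the join-closure of S = {x_1,...,x_n}, with f(x_1) ≥ f(x_2) ≥ ⋯ ≥ f(x_n). If λ̂_1 ≤ λ̂_2 ≤ ⋯ ≤ λ̂_n are the eigenvalues of the join matrix (f(x_i ∨ x_j))_{i,j=1}^n, then λ̂_k ≤ k f(x_{n−k+1}) for all k = 1,...,n, and f(x_1) ≤ λ̂_n. -/

import Mathlib

/-- The join-closure of a set `S` in a lattice. -/
def joinClosure {P : Type*} [Lattice P] (S : Set P) : Set P :=
  ⋂₀ {T : Set P | S ⊆ T ∧ ∀ a ∈ T, ∀ b ∈ T, a ⊔ b ∈ T}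

open Polynomial Matrix in
private lemma jmeb_charpoly_conj {n : ℕ} (U D V : Matrix (Fin n) (Fin n) ℝ)
    (hUV : U * V = 1) : (U * D * V).charpoly = D.charpoly := by
  unfold Matrix.charpoly charmatrix
  have hscal : ∀ M : Matrix (Fin n) (Fin n) ℝ[X],
      (Matrix.scalar (Fin n) (X : ℝ[X])) * M = M * (Matrix.scalar (Fin n) (X : ℝ[X])) :=
    fun M => (Matrix.scalar_commute _ (fun r => Commute.all _ _) M)
  have hUV' : C.mapMatrix U * C.mapMatrix V = 1 := by
    rw [← _root_.map_mul, hUV]; simp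
  have e1 : C.mapMatrix U * (Matrix.scalar (Fin n) (X : ℝ[X])) * C.mapMatrix V
      = Matrix.scalar (Fin n) (X : ℝ[X]) := by
    rw [← hscal, mul_assoc, hUV', mul_one]
  have e2 : C.mapMatrix U * C.mapMatrix D * C.mapMatrix V = C.mapMatrix (U * D * V) := by
    rw [← _root_.map_mul, ← _root_.map_mul]
  have key : Matrix.scalar (Fin n) (X : ℝ[X]) - C.mapMatrix (U * D * V)
      = C.mapMatrix U * (Matrix.scalar (Fin n) (X : ℝ[X]) - C.mapMatrix D) * C.mapMatrix V := by
    have expand : C.mapMatrix U * (Matrix.scalar (Fin n) (X : ℝ[X]) - C.mapMatrix D) * C.mapMatrix V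
        = C.mapMatrix U * (Matrix.scalar (Fin n) (X : ℝ[X])) * C.mapMatrix V
          - C.mapMatrix U * C.mapMatrix D * C.mapMatrix V := by noncomm_ring
    rw [expand, e1, e2]
  rw [key, Matrix.det_mul, Matrix.det_mul]
  have h1 : (C.mapMatrix U).det * (C.mapMatrix V).det = 1 := by
    rw [← Matrix.det_mul, hUV']; simp
  rw [mul_right_comm, h1, one_mul]

open Polynomial Matrix in
private lemma jmeb_charpoly_diag {n : ℕ} (d : Fin n → ℝ) :
    (Matrix.diagonal d).charpoly = ∏ i, (X - C (d i)) := by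
  unfold Matrix.charpoly charmatrix
  have : Matrix.scalar (Fin n) (X : ℝ[X]) - C.mapMatrix (Matrix.diagonal d)
      = Matrix.diagonal (fun i => X - C (d i)) := by
    ext i j
    by_cases h : i = j <;> simp [Matrix.scalar_apply, Matrix.diagonal, h]
  rw [this, Matrix.det_diagonal]

open Polynomial Matrix in
private lemma jmeb_charpoly_hermitian {n : ℕ} {A : Matrix (Fin n) (Fin n) ℝ}
    (hA : A.IsHermitian) : A.charpoly = ∏ i, (X - C (hA.eigenvalues i)) := by
  have h := hA.spectral_theorem
  have h2 := jmeb_charpoly_conj (hA.eigenvectorUnitary : Matrix (Fin n) (Fin n) ℝ)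
    (Matrix.diagonal (RCLike.ofReal ∘ hA.eigenvalues))
    (star (hA.eigenvectorUnitary : Matrix (Fin n) (Fin n) ℝ))
    (by simpa using (Matrix.mem_unitaryGroup_iff.mp hA.eigenvectorUnitary.2))
  simp only [Unitary.conjStarAlgAut_apply, Unitary.coe_star] at h
  rw [← h] at h2
  rw [h2]
  simpa using jmeb_charpoly_diag (hA.eigenvalues)

open scoped RealInnerProductSpace in
private lemma jmeb_quad_coord {n : ℕ} (A : Matrix (Fin n) (Fin n) ℝ)
    (v : EuclideanSpace ℝ (Fin n)) :
    ⟪v, Matrix.toEuclideanLin A v⟫ = ∑ i, ∑ j, v i * (A i j * v j) := by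
  rw [Matrix.toEuclideanLin_apply]
  simp [PiLp.inner_apply, Matrix.mulVec, dotProduct, Finset.mul_sum, RCLike.inner_apply]
  refine Finset.sum_congr rfl fun i _ => ?_
  rw [Finset.sum_mul]
  refine Finset.sum_congr rfl fun j _ => ?_
  ring

open scoped RealInnerProductSpace in
private lemma jmeb_inner_self_repr {n : ℕ}
    (b : OrthonormalBasis (Fin n) ℝ (EuclideanSpace ℝ (Fin n)))
    (v : EuclideanSpace ℝ (Fin n)) :
    ⟪v, v⟫ = ∑ i, b.repr v i * b.repr v i := by
  rw [← b.repr.inner_map_map v v]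
  simp only [PiLp.inner_apply, RCLike.inner_apply, starRingEnd_apply, star_trivial]

open scoped RealInnerProductSpace in
private lemma jmeb_quad_repr {n : ℕ} {A : Matrix (Fin n) (Fin n) ℝ} (hA : A.IsHermitian)
    (v : EuclideanSpace ℝ (Fin n)) :
    ⟪v, Matrix.toEuclideanLin A v⟫
      = ∑ i, hA.eigenvalues i
          * (hA.eigenvectorBasis.repr v i * hA.eigenvectorBasis.repr v i) := by
  set u := hA.eigenvectorBasis with hu
  have hTu : ∀ j, Matrix.toEuclideanLin A (u j) = hA.eigenvalues j • u j := by
    intro j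
    apply (WithLp.equiv 2 (Fin n → ℝ)).injective
    simpa using hA.mulVec_eigenvectorBasis j
  have hv : Matrix.toEuclideanLin A v = ∑ j, (u.repr v j * hA.eigenvalues j) • u j := by
    conv_lhs => rw [← u.sum_repr v, map_sum]
    refine Finset.sum_congr rfl fun j _ => ?_
    rw [_root_.map_smul, hTu j, smul_smul]
  rw [hv, inner_sum]
  refine Finset.sum_congr rfl fun j _ => ?_
  rw [real_inner_smul_right, real_inner_comm, ← u.repr_apply_apply]
  ring

private lemma jmeb_repr_eq_zero_of_mem_span {n : ℕ}
    (b : OrthonormalBasis (Fin n) ℝ (EuclideanSpace ℝ (Fin n)))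
    (S : Set (Fin n)) {v : EuclideanSpace ℝ (Fin n)}
    (hv : v ∈ Submodule.span ℝ (b '' S)) {i : Fin n} (hi : i ∉ S) : b.repr v i = 0 := by
  induction hv using Submodule.span_induction with
  | mem w hw =>
    obtain ⟨j, hj, rfl⟩ := hw
    have hij : i ≠ j := by rintro rfl; exact hi hj
    rw [b.repr_self, EuclideanSpace.single_apply, if_neg hij]
  | zero => simp
  | add w z _ _ hw hz => rw [map_add]; simp [hw, hz]
  | smul c w _ hw => rw [map_smul]; simp [hw]

private lemma jmeb_finrank_span {n : ℕ}
    (b : OrthonormalBasis (Fin n) ℝ (EuclideanSpace ℝ (Fin n))) (S : Finset (Fin n)) :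
    Module.finrank ℝ (Submodule.span ℝ (b '' (S : Set (Fin n)))) = S.card := by
  have li : LinearIndependent ℝ (fun j : (S : Set (Fin n)) => b j) :=
    b.orthonormal.linearIndependent.comp _ Subtype.coe_injective
  have h := finrank_span_eq_card li
  rw [← Set.image_eq_range] at h
  rw [h]; simp

private lemma jmeb_exists_nonzero_inter {n : ℕ}
    (V₁ V₂ : Submodule ℝ (EuclideanSpace ℝ (Fin n)))
    (h : n < Module.finrank ℝ V₁ + Module.finrank ℝ V₂) :
    ∃ v : EuclideanSpace ℝ (Fin n), v ∈ V₁ ⊓ V₂ ∧ v ≠ 0 := by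
  have h1 := Submodule.finrank_sup_add_finrank_inf_eq V₁ V₂
  have h2 : Module.finrank ℝ (V₁ ⊔ V₂ : Submodule ℝ _) ≤ n := by
    simpa [finrank_euclideanSpace] using Submodule.finrank_le (V₁ ⊔ V₂)
  have hpos : 0 < Module.finrank ℝ (V₁ ⊓ V₂ : Submodule ℝ _) := by omega
  have hne : (V₁ ⊓ V₂ : Submodule ℝ _) ≠ ⊥ := by
    intro hbot
    rw [hbot, finrank_bot] at hpos; omega
  exact Submodule.exists_mem_ne_zero_of_ne_bot hne

open Polynomial in
private lemma jmeb_roots_prod {n : ℕ} (g : Fin n → ℝ) :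
    (∏ i, (X - C (g i))).roots = Finset.univ.val.map g := by
  have h : (Finset.univ.val.map fun i => X - C (g i))
      = ((Finset.univ.val.map g).map fun a => X - C a) := by
    rw [Multiset.map_map]; rfl
  rw [Finset.prod_eq_multiset_prod, h, Polynomial.roots_multiset_prod_X_sub_C]

open scoped RealInnerProductSpace

/-- **Eigenvalue bounds for join matrices**: if `f` is nonnegative,
order-reversing on the join-closure of `S`, decreasing along the indexing, and
`λ̂ 0 ≤ λ̂ 1 ≤ ⋯ ≤ λ̂ (n-1)` are the eigenvalues (with multiplicity) of the join
matrix `(f (x i ⊔ x j))`, then `λ̂ k ≤ (k+1) * f (x (n-1-k))` for each (0-indexed)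
`k` (i.e. the 1-indexed bound `λ̂_k ≤ k f(x_{n-k+1})`), and `f (x 0) ≤ λ̂ (n-1)`. -/
theorem join_matrix_eigenvalue_bounds {P : Type*} [Lattice P] {n : ℕ} (hn : 0 < n)
    (x : Fin n → P) (f : P → ℝ)
    (hf_nonneg : ∀ a, 0 ≤ f a)
    (hf_anti : ∀ a ∈ joinClosure (Set.range x), ∀ b ∈ joinClosure (Set.range x),
      a ≤ b → f b ≤ f a)
    (hdec : ∀ i j : Fin n, i ≤ j → f (x j) ≤ f (x i))
    (lam : Fin n → ℝ) (hlam_mono : Monotone lam)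
    (hlam : (Matrix.of fun i j => f (x i ⊔ x j)).charpoly =
      ∏ i, (Polynomial.X - Polynomial.C (lam i))) :
    (∀ k : Fin n, lam k ≤ (k.1 + 1 : ℝ) * f (x k.rev)) ∧
      f (x ⟨0, hn⟩) ≤ lam ⟨n - 1, by omega⟩ := by
  classical
  set A : Matrix (Fin n) (Fin n) ℝ := Matrix.of fun i j => f (x i ⊔ x j) with hAdef
  have hA : A.IsHermitian := by
    ext i j
    simp [hAdef, Matrix.conjTranspose_apply, sup_comm]
  set μ : Fin n → ℝ := hA.eigenvalues with hμ
  set u := hA.eigenvectorBasis with hu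
  -- join-closure facts
  have hmemx : ∀ i, x i ∈ joinClosure (Set.range x) := fun i =>
    Set.mem_sInter.2 fun T hT => hT.1 ⟨i, rfl⟩
  have hmemsup : ∀ i j, x i ⊔ x j ∈ joinClosure (Set.range x) := fun i j =>
    Set.mem_sInter.2 fun T hT =>
      hT.2 _ (Set.mem_sInter.1 (hmemx i) T hT) _ (Set.mem_sInter.1 (hmemx j) T hT)
  have hentry_le : ∀ i j : Fin n, A i j ≤ f (x i) := fun i j =>
    hf_anti _ (hmemx i) _ (hmemsup i j) le_sup_left
  have hentry_nonneg : ∀ i j : Fin n, 0 ≤ A i j := fun i j => hf_nonneg _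
  -- multiset of eigenvalues
  have hms : Finset.univ.val.map μ = Finset.univ.val.map lam := by
    rw [← jmeb_roots_prod μ, ← jmeb_roots_prod lam, ← jmeb_charpoly_hermitian hA, hlam]
  have hexists : ∀ i, ∃ j, lam j = μ i := by
    intro i
    have : μ i ∈ Finset.univ.val.map lam := by
      rw [← hms]
      exact Multiset.mem_map_of_mem μ (Finset.mem_univ_val _)
    obtain ⟨j, _, hj⟩ := Multiset.mem_map.1 this
    exact ⟨j, hj⟩
  have hcount : ∀ c : ℝ, (Finset.univ.filter fun j => c ≤ lam j).card
      = (Finset.univ.filter fun i => c ≤ μ i).card := by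
    intro c
    have h := congrArg (fun m : Multiset ℝ => (m.filter fun y => c ≤ y).card) hms
    simp only [Multiset.filter_map, Multiset.card_map] at h
    rw [Finset.card_def, Finset.card_def, Finset.filter_val, Finset.filter_val]
    exact h.symm
  constructor
  · -- the main bounds
    intro k
    set c : ℝ := f (x k.rev) with hc
    set S₁ : Finset (Fin n) := Finset.univ.filter fun i => lam k ≤ μ i with hS₁
    set S₂ : Finset (Fin n) := Finset.Ici k.rev with hS₂
    have hS₁card : n - k.1 ≤ S₁.card := by
      rw [hS₁, ← hcount]
      calc n - k.1 = (Finset.Ici k).card := (Fin.card_Ici k).symm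
        _ ≤ _ := Finset.card_le_card fun j hj =>
            Finset.mem_filter.2 ⟨Finset.mem_univ _, hlam_mono (Finset.mem_Ici.1 hj)⟩
    have hS₂card : S₂.card = k.1 + 1 := by
      rw [hS₂, Fin.card_Ici, Fin.val_rev]
      omega
    set V₁ := Submodule.span ℝ (u '' (S₁ : Set (Fin n))) with hV₁
    set V₂ := Submodule.span ℝ
      ((EuclideanSpace.basisFun (Fin n) ℝ) '' (S₂ : Set (Fin n))) with hV₂
    obtain ⟨v, hv, hv0⟩ := jmeb_exists_nonzero_inter V₁ V₂ (by
      rw [hV₁, hV₂, jmeb_finrank_span, jmeb_finrank_span, hS₂card]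
      omega)
    obtain ⟨hv1, hv2⟩ := hv
    have hvpos : (0:ℝ) < ⟪v, v⟫ :=
      lt_of_le_of_ne real_inner_self_nonneg
        (fun h' => hv0 (inner_self_eq_zero.1 h'.symm))
    have hvz : ∀ i, i ∉ S₂ → v i = 0 := by
      intro i hi
      have h := jmeb_repr_eq_zero_of_mem_span (EuclideanSpace.basisFun (Fin n) ℝ) _ hv2
        (i := i) (by simpa using hi)
      rwa [EuclideanSpace.basisFun_repr] at h
    -- lower bound
    have hlower : lam k * ⟪v, v⟫ ≤ ⟪v, Matrix.toEuclideanLin A v⟫ := by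
      rw [jmeb_quad_repr hA, jmeb_inner_self_repr hA.eigenvectorBasis v, Finset.mul_sum]
      refine Finset.sum_le_sum fun i _ => ?_
      by_cases hi : i ∈ S₁
      · exact mul_le_mul_of_nonneg_right ((Finset.mem_filter.1 hi).2) (mul_self_nonneg _)
      · have h0 : u.repr v i = 0 :=
          jmeb_repr_eq_zero_of_mem_span u _ hv1 (by simpa using hi)
        rw [← hu, h0]
        simp
    -- upper bound
    have hAle : ∀ i ∈ S₂, ∀ j : Fin n, A i j ≤ c := fun i hi j =>
      le_trans (hentry_le i j) (hdec k.rev i (Finset.mem_Ici.1 hi))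
    have hsum_eq : ∑ i ∈ S₂, v i * v i = ⟪v, v⟫ := by
      rw [jmeb_inner_self_repr (EuclideanSpace.basisFun (Fin n) ℝ) v]
      simp only [EuclideanSpace.basisFun_repr]
      exact Finset.sum_subset (Finset.subset_univ S₂)
        (fun i _ hi => by rw [hvz i hi]; ring)
    have hupper : ⟪v, Matrix.toEuclideanLin A v⟫ ≤ ((k.1 + 1 : ℝ) * c) * ⟪v, v⟫ := by
      rw [jmeb_quad_coord]
      have hrestrict : ∑ i, ∑ j, v i * (A i j * v j)
          = ∑ i ∈ S₂, ∑ j ∈ S₂, v i * (A i j * v j) := by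
        rw [← Finset.sum_subset (Finset.subset_univ S₂)
          (fun i _ hi => by rw [hvz i hi]; simp)]
        refine Finset.sum_congr rfl fun i _ => ?_
        rw [← Finset.sum_subset (Finset.subset_univ S₂)
          (fun j _ hj => by rw [hvz j hj]; ring)]
      rw [hrestrict]
      have step1 : ∑ i ∈ S₂, ∑ j ∈ S₂, v i * (A i j * v j)
          ≤ ∑ i ∈ S₂, ∑ j ∈ S₂, |v i| * (c * |v j|) := by
        refine Finset.sum_le_sum fun i hi => Finset.sum_le_sum fun j hj => ?_
        calc v i * (A i j * v j) ≤ |v i * (A i j * v j)| := le_abs_self _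
          _ = |v i| * (A i j * |v j|) := by
              rw [abs_mul, abs_mul, abs_of_nonneg (hentry_nonneg i j)]
          _ ≤ |v i| * (c * |v j|) := by
              refine mul_le_mul_of_nonneg_left ?_ (abs_nonneg _)
              exact mul_le_mul_of_nonneg_right (hAle i hi j) (abs_nonneg _)
      have step2 : ∑ i ∈ S₂, ∑ j ∈ S₂, |v i| * (c * |v j|)
          = c * ((∑ i ∈ S₂, |v i|) * (∑ i ∈ S₂, |v i|)) := by
        rw [Finset.sum_mul_sum, Finset.mul_sum]
        refine Finset.sum_congr rfl fun i _ => ?_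
        rw [Finset.mul_sum]
        refine Finset.sum_congr rfl fun j _ => ?_
        ring
      have step3 : (∑ i ∈ S₂, |v i|) * (∑ i ∈ S₂, |v i|) ≤ (k.1 + 1 : ℝ) * ⟪v, v⟫ := by
        have h := sq_sum_le_card_mul_sum_sq (s := S₂) (f := fun i => |v i|)
        rw [hS₂card] at h
        calc (∑ i ∈ S₂, |v i|) * (∑ i ∈ S₂, |v i|)
            = (∑ i ∈ S₂, |v i|) ^ 2 := (sq _).symm
          _ ≤ (k.1 + 1 : ℝ) * ∑ i ∈ S₂, |v i| ^ 2 := by exact_mod_cast h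
          _ = (k.1 + 1 : ℝ) * ⟪v, v⟫ := by
              rw [← hsum_eq]
              congr 1
              exact Finset.sum_congr rfl fun i _ => by rw [sq_abs, sq]
      calc ∑ i ∈ S₂, ∑ j ∈ S₂, v i * (A i j * v j)
          ≤ c * ((∑ i ∈ S₂, |v i|) * (∑ i ∈ S₂, |v i|)) := by rw [← step2]; exact step1
        _ ≤ c * ((k.1 + 1 : ℝ) * ⟪v, v⟫) := mul_le_mul_of_nonneg_left step3 (hf_nonneg _)
        _ = ((k.1 + 1 : ℝ) * c) * ⟪v, v⟫ := by ring
    have := le_trans hlower hupper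
    exact le_of_mul_le_mul_right this hvpos
  · -- the last eigenvalue bound
    have hμM : ∀ i, μ i ≤ lam ⟨n - 1, by omega⟩ := by
      intro i
      obtain ⟨j, hj⟩ := hexists i
      rw [← hj]
      exact hlam_mono (by rw [Fin.le_def]; simp; omega)
    set e0 : EuclideanSpace ℝ (Fin n) := EuclideanSpace.single ⟨0, hn⟩ (1:ℝ) with he0
    have h1 : ⟪e0, e0⟫ = 1 := by
      simp [he0, real_inner_self_eq_norm_sq, EuclideanSpace.norm_single]
    have h2 : ⟪e0, Matrix.toEuclideanLin A e0⟫ = f (x ⟨0, hn⟩) := by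
      rw [jmeb_quad_coord]
      simp [he0, EuclideanSpace.single_apply, hAdef, sup_idem]
    have h3 : ⟪e0, Matrix.toEuclideanLin A e0⟫ ≤ lam ⟨n - 1, by omega⟩ * ⟪e0, e0⟫ := by
      rw [jmeb_quad_repr hA, jmeb_inner_self_repr hA.eigenvectorBasis e0, Finset.mul_sum]
      exact Finset.sum_le_sum fun i _ =>
        mul_le_mul_of_nonneg_right (hμM i) (mul_self_nonneg _)
    rw [h1, mul_one] at h3
    rw [← h2]
    exact h3
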